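/- Let M, a, s be positive integers with M > 1 such that ∑_{i=0}^{M-1} (a+i)^2 = s^2. If M = 24·m₁ + 2 for a nonnegative integer m₁, then for every integer i ≥ 1 one has m₁ ≢ (19·3^(2i-1) − 1)/8 (mod 3^(2i)) and m₁ ≢ (11·3^(2i-1) − 1)/8 (mod 3^(2i)). (For i ≥ 1 both 19·3^(2i-1) − 1 and 11·3^(2i-1) − 1 are divisible by 8, so these residues are integers.) -/

import Mathlib

lemma sum_id' (n : ℕ) : 2 * ∑ i ∈ Finset.range (n+1), i = n*(n+1) := by
  induction n with
  | zero => simp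
  | succ n ih => rw [Finset.sum_range_succ, Nat.mul_add, ih]; ring

lemma sum_sq' (n : ℕ) : 6 * ∑ i ∈ Finset.range (n+1), i^2 = n*(n+1)*(2*n+1) := by
  induction n with
  | zero => simp
  | succ n ih => rw [Finset.sum_range_succ, Nat.mul_add, ih]; ring

lemma sum_expand (a n : ℕ) : ∑ i ∈ Finset.range n, (a+i)^2
    = n*a^2 + 2*a*(∑ i ∈ Finset.range n, i) + ∑ i ∈ Finset.range n, i^2 := by
  induction n with
  | zero => simp
  | succ n ih =>
      rw [Finset.sum_range_succ, ih, Finset.sum_range_succ, Finset.sum_range_succ]; ring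

lemma key_identity (a m : ℕ) : 12 * ∑ i ∈ Finset.range (24*m+2), (a+i)^2
    = (24*m+2) * (3*(2*a+24*m+1)^2 + (576*m^2+96*m+3)) := by
  have e : 24*m+1+1 = 24*m+2 := rfl
  have h1 := sum_id' (24*m+1)
  have h2 := sum_sq' (24*m+1)
  rw [e] at h1 h2
  rw [sum_expand]
  zify at h1 h2 ⊢
  linear_combination (12*(a:ℤ))*h1 + 2*h2

lemma sq3 (x : ℕ) (h : x % 3 ≠ 0) : x^2 % 3 = 1 := by
  have h3 : x % 3 = 1 ∨ x % 3 = 2 := by omega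
  rcases h3 with h3 | h3 <;> rw [Nat.pow_mod, h3] <;> norm_num

lemma extract3 (n : ℕ) (hn : n ≠ 0) : ∃ e m, n = 3^e * m ∧ m % 3 ≠ 0 := by
  refine ⟨n.factorization 3, n / 3^(n.factorization 3),
    (Nat.ordProj_mul_ordCompl_eq_self n 3).symm, ?_⟩
  have h := Nat.not_dvd_ordCompl (by norm_num : Nat.Prime 3) hn
  intro h0
  exact h (Nat.dvd_of_mod_eq_zero h0)

lemma pow3_lt {a b A B : ℕ} (hA : A % 3 ≠ 0) (h : 3^a * A = 3^b * B) (hab : a < b) :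
    False := by
  obtain ⟨d, rfl⟩ : ∃ d, b = a + (d + 1) := ⟨b - a - 1, by omega⟩
  rw [pow_add] at h
  have hpos : 0 < (3:ℕ)^a := pow_pos (by norm_num) a
  rw [mul_assoc] at h
  have hA' : A = 3^(d+1) * B := Nat.eq_of_mul_eq_mul_left hpos h
  have : A % 3 = 0 := by
    rw [hA', pow_succ]
    simp [Nat.mul_mod]
  exact hA this

lemma pow3_eq {a b A B : ℕ} (hA : A % 3 ≠ 0) (hB : B % 3 ≠ 0) (h : 3^a * A = 3^b * B) :
    a = b ∧ A = B := by
  rcases lt_trichotomy a b with hab | hab | hab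
  · exact absurd (pow3_lt hA h hab) (by simp)
  · subst hab
    refine ⟨rfl, Nat.eq_of_mul_eq_mul_left (pow_pos (by norm_num) a) h⟩
  · exact absurd (pow3_lt hB h.symm hab) (by simp)

lemma no_sol (m₁ a s k u : ℕ) (ha : 1 ≤ a) (hs : 1 ≤ s) (hu : u % 3 ≠ 0)
    (h3 : 24*m₁ + 3 = 3^(2*k+2) * u)
    (hsum : ∑ i ∈ Finset.range (24*m₁+2), (a + i)^2 = s^2) : False := by
  have hD : 576*m₁^2+96*m₁+3 = (24*m₁+1) * (3^(2*k+2)*u) := by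
    rw [← h3]; ring
  have hkey : 12 * s^2 = (24*m₁+2) * (3*(2*a+24*m₁+1)^2 + (24*m₁+1) * (3^(2*k+2)*u)) := by
    rw [← hsum, key_identity, hD]
  obtain ⟨e, s', hs', hs'3⟩ := extract3 s (by omega)
  obtain ⟨j, c', hc', hc'3⟩ := extract3 (2*a+24*m₁+1) (by omega)
  have hL : 12 * s^2 = 3^(2*e+1) * (4*s'^2) := by rw [hs']; ring
  have hs2 : (4*s'^2) % 3 = 1 := by
    rw [Nat.mul_mod, sq3 _ hs'3]
  rcases le_or_gt j k with hjk | hjk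
  · obtain ⟨d, rfl⟩ : ∃ d, k = j + d := ⟨k - j, by omega⟩
    have hR : (24*m₁+2) * (3*(2*a+24*m₁+1)^2 + (24*m₁+1) * (3^(2*(j+d)+2)*u))
        = 3^(2*j+1) * ((24*m₁+2) * (c'^2 + 3^(2*d+1)*((24*m₁+1)*u))) := by
      rw [hc']; ring
    have h' : 3^(2*e+1) * (4*s'^2) = 3^(2*j+1) * ((24*m₁+2) * (c'^2 + 3^(2*d+1)*((24*m₁+1)*u))) :=
      hL.symm.trans (hkey.trans hR)
    have t0 : (3 ^ (2*d+1) * ((24*m₁+1)*u)) % 3 = 0 := by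
      have hdv : (3:ℕ) ∣ 3 ^ (2*d+1) * ((24*m₁+1)*u) :=
        ⟨3^(2*d) * ((24*m₁+1)*u), by ring⟩
      omega
    have hc2 : c'^2 % 3 = 1 := sq3 _ hc'3
    have hXmod : ((24*m₁+2) * (c'^2 + 3^(2*d+1)*((24*m₁+1)*u))) % 3 = 2 := by
      rw [Nat.mul_mod, Nat.add_mod (c'^2), hc2, t0]
      omega
    obtain ⟨-, heq2⟩ := pow3_eq (by omega) (by omega) h'
    rw [heq2] at hs2
    omega
  · obtain ⟨d, rfl⟩ : ∃ d, j = k + 1 + d := ⟨j - (k+1), by omega⟩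
    have hR : (24*m₁+2) * (3*(2*a+24*m₁+1)^2 + (24*m₁+1) * (3^(2*k+2)*u))
        = 3^(2*k+2) * ((24*m₁+2) * (3^(2*d+1)*c'^2 + (24*m₁+1)*u)) := by
      rw [hc']; ring
    have h' : 3^(2*e+1) * (4*s'^2) = 3^(2*k+2) * ((24*m₁+2) * (3^(2*d+1)*c'^2 + (24*m₁+1)*u)) :=
      hL.symm.trans (hkey.trans hR)
    have hXne : ((24*m₁+2) * (3^(2*d+1)*c'^2 + (24*m₁+1)*u)) % 3 ≠ 0 := by
      intro h0
      have h3' : (3:ℕ) ∣ (24*m₁+2) * (3^(2*d+1)*c'^2 + (24*m₁+1)*u) :=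
        Nat.dvd_of_mod_eq_zero h0
      rcases (Nat.prime_three.dvd_mul.mp h3') with hone | htwo
      · omega
      · have hd1 : (3:ℕ) ∣ 3^(2*d+1)*c'^2 := ⟨3^(2*d)*c'^2, by ring⟩
        have h2' : (3:ℕ) ∣ (24*m₁+1)*u := (Nat.dvd_add_right hd1).mp htwo
        rcases Nat.prime_three.dvd_mul.mp h2' with h'' | h'' <;> omega
    obtain ⟨heq1, -⟩ := pow3_eq (by omega) hXne h'
    omega

theorem stmt (M a s m₁ : ℕ) (hM : 1 < M) (ha : 1 ≤ a) (hs : 1 ≤ s)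
    (hsum : ∑ i ∈ Finset.range M, (a + i) ^ 2 = s ^ 2)
    (hMeq : M = 24 * m₁ + 2) :
    ∀ i : ℕ, 1 ≤ i →
      ¬ m₁ ≡ (19 * 3 ^ (2 * i - 1) - 1) / 8 [MOD 3 ^ (2 * i)] ∧
      ¬ m₁ ≡ (11 * 3 ^ (2 * i - 1) - 1) / 8 [MOD 3 ^ (2 * i)] := by
  subst hMeq
  intro i hi
  obtain ⟨k, rfl⟩ : ∃ k, i = k + 1 := ⟨i - 1, by omega⟩
  have e1 : 2*(k+1)-1 = 2*k+1 := by omega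
  have e2 : 2*(k+1) = 2*k+2 := by omega
  rw [e1, e2]
  have h9 : (9:ℕ)^k % 8 = 1 := by rw [Nat.pow_mod]; norm_num
  have hpow : (3:ℕ)^(2*k+1) = 3 * 9^k := by
    rw [pow_succ, pow_mul]; ring
  have hp : (3:ℕ)^(2*k+2) = 3^(2*k+1)*3 := by ring
  constructor
  · intro hmod
    have hdvd : 19 * 3^(2*k+1) % 8 = 1 := by
      rw [hpow]; omega
    have hr1 : 8 * ((19 * 3^(2*k+1) - 1)/8) + 1 = 19*3^(2*k+1) := by omega
    have h1 : 8*m₁ + 1 ≡ 19*3^(2*k+1) [MOD 3^(2*k+2)] := by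
      have h' := (hmod.mul_left 8).add_right 1
      rwa [hr1] at h'
    have hmodval : 19 * 3^(2*k+1) % 3^(2*k+2) = 3^(2*k+1) := by
      rw [hp, show 19*3^(2*k+1) = 3^(2*k+1)*19 by ring, Nat.mul_mod_mul_left]
      norm_num
    have h8 : (8*m₁+1) % 3^(2*k+2) = 3^(2*k+1) := by
      rw [Nat.ModEq] at h1
      rw [h1, hmodval]
    have hq : 8*m₁+1 = 3^(2*k+2)*((8*m₁+1)/3^(2*k+2)) + 3^(2*k+1) := by
      rw [← h8]; exact (Nat.div_add_mod _ _).symm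
    set q := (8*m₁+1)/3^(2*k+2) with hqdef
    have h3 : 24*m₁+3 = 3^(2*k+2)*(3*q+1) := by
      have h24 : 24*m₁+3 = 3*(8*m₁+1) := by ring
      rw [h24, hq, hp]; ring
    exact no_sol m₁ a s k (3*q+1) ha hs (by omega) h3 hsum
  · intro hmod
    have hdvd : 11 * 3^(2*k+1) % 8 = 1 := by
      rw [hpow]; omega
    have hr1 : 8 * ((11 * 3^(2*k+1) - 1)/8) + 1 = 11*3^(2*k+1) := by omega
    have h1 : 8*m₁ + 1 ≡ 11*3^(2*k+1) [MOD 3^(2*k+2)] := by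
      have h' := (hmod.mul_left 8).add_right 1
      rwa [hr1] at h'
    have hmodval : 11 * 3^(2*k+1) % 3^(2*k+2) = 3^(2*k+1)*2 := by
      rw [hp, show 11*3^(2*k+1) = 3^(2*k+1)*11 by ring, Nat.mul_mod_mul_left]
    have h8 : (8*m₁+1) % 3^(2*k+2) = 3^(2*k+1)*2 := by
      rw [Nat.ModEq] at h1
      rw [h1, hmodval]
    have hq : 8*m₁+1 = 3^(2*k+2)*((8*m₁+1)/3^(2*k+2)) + 3^(2*k+1)*2 := by
      rw [← h8]; exact (Nat.div_add_mod _ _).symm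
    set q := (8*m₁+1)/3^(2*k+2) with hqdef
    have h3 : 24*m₁+3 = 3^(2*k+2)*(3*q+2) := by
      have h24 : 24*m₁+3 = 3*(8*m₁+1) := by ring
      rw [h24, hq, hp]; ring
    exact no_sol m₁ a s k (3*q+2) ha hs (by omega) h3 hsum
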